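/- Let H be a complex Hilbert space and let A and B be bounded self-adjoint operators on H; for s ∈ ℝ write cos(sA) := (exp(isA) + exp(-isA))/2 and cos(sB) := (exp(isB) + exp(-isB))/2, where exp denotes the exponential in the Banach algebra of bounded operators on H. Let ψ : ℝ → ℂ be a Schwartz function, let c > 0, let φ : ℝ → ℂ be a bounded continuous function with support contained in [−2c, 2c], and for ε ∈ (0,1] define T_ε^A := ∫_ℝ φ(s) ε^{-1} ψ(s/ε) cos(sA) ds and T_ε^B := ∫_ℝ φ(s) ε^{-1} ψ(s/ε) cos(sB) ds (Bochner integrals). Then for all ε ∈ (0,1], ‖T_ε^A − T_ε^B‖ ≤ (1/2) · ‖A² − B²‖ · (sup_{s∈ℝ} |φ(s)|) · (∫_ℝ σ² |ψ(σ)| dσ) · ε². -/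

import Mathlib

open MeasureTheory Filter Topology

set_option synthInstance.maxHeartbeats 1000000
set_option maxHeartbeats 1000000

/-- The operator cosine family `cos (s A) = (exp (i s A) + exp (-i s A)) / 2` of a bounded
operator `A` on a complex Hilbert space. -/
noncomputable def opCos {H : Type*} [NormedAddCommGroup H] [InnerProductSpace ℂ H]
    [CompleteSpace H] (A : H →L[ℂ] H) (s : ℝ) : H →L[ℂ] H :=
  (2 : ℂ)⁻¹ • (NormedSpace.exp (((s : ℂ) * Complex.I) • A) +
    NormedSpace.exp ((-(s : ℂ) * Complex.I) • A))

/-- The regularization operator `T_ε^A = ∫ φ(s) ε⁻¹ ψ(s/ε) cos (s A) ds`. -/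
noncomputable def regOp {H : Type*} [NormedAddCommGroup H] [InnerProductSpace ℂ H]
    [CompleteSpace H] (A : H →L[ℂ] H) (φ : ℝ → ℂ) (ψ : ℝ → ℂ) (ε : ℝ) : H →L[ℂ] H :=
  ∫ s : ℝ, (φ s * (ε : ℂ)⁻¹ * ψ (s / ε)) • opCos A s

namespace Stmt9Aux

open NormedSpace intervalIntegral

set_option linter.unusedSectionVars false

variable {𝔸 : Type*} [NormedRing 𝔸] [NormedAlgebra ℝ 𝔸] [CompleteSpace 𝔸]

noncomputable instance : NormedAlgebra ℚ 𝔸 := NormedAlgebra.restrictScalars ℚ ℝ 𝔸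

/-- abstract operator cosine -/
noncomputable def oC (M : 𝔸) (s : ℝ) : 𝔸 :=
  (2 : ℝ)⁻¹ • (exp (s • M) + exp (s • (-M)))

/-- abstract operator sine times `M` (up to a factor) -/
noncomputable def oD (M : 𝔸) (s : ℝ) : 𝔸 :=
  (2 : ℝ)⁻¹ • (exp (s • M) - exp (s • (-M)))

/-- abstract operator sine over `M` -/
noncomputable def oS (M : 𝔸) (s : ℝ) : 𝔸 := ∫ u in (0:ℝ)..s, oC M u

lemma contE (M : 𝔸) : Continuous fun s : ℝ => exp (s • M) :=
  exp_continuous.comp (continuous_id.smul continuous_const)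

lemma contC (M : 𝔸) : Continuous (oC M) :=
  (((contE M).add (contE (-M))).const_smul _)

lemma hC' (M : 𝔸) (s : ℝ) : HasDerivAt (oC M) (M * oD M s) s := by
  have h := ((hasDerivAt_exp_smul_const' M s).add
    (hasDerivAt_exp_smul_const' (-M) s)).const_smul ((2:ℝ)⁻¹)
  convert h using 1
  case e'_4 => rfl
  case e'_8 => rfl
  simp only [oD, smul_sub, smul_add, mul_sub, neg_mul, mul_smul_comm, smul_neg]
  abel

lemma hD' (M : 𝔸) (s : ℝ) : HasDerivAt (oD M) (M * oC M s) s := by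
  have h := ((hasDerivAt_exp_smul_const' M s).sub
    (hasDerivAt_exp_smul_const' (-M) s)).const_smul ((2:ℝ)⁻¹)
  convert h using 1
  case e'_4 => rfl
  case e'_8 => rfl
  simp only [oC, smul_sub, smul_add, mul_add, neg_mul, mul_smul_comm, smul_neg, sub_neg_eq_add]

lemma hS' (M : 𝔸) (s : ℝ) : HasDerivAt (oS M) (oC M s) s :=
  intervalIntegral.integral_hasDerivAt_right ((contC M).intervalIntegrable _ _)
    ((contC M).stronglyMeasurableAtFilter _ _) (contC M).continuousAt

lemma contS (M : 𝔸) : Continuous (oS M) :=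
  Differentiable.continuous (fun s => (hS' M s).differentiableAt)

lemma oC_zero (M : 𝔸) : oC M 0 = 1 := by
  have h2 : ((1:𝔸) + 1) = (2:ℝ) • (1:𝔸) := by rw [two_smul]
  simp only [oC, zero_smul, exp_zero, h2, smul_smul]
  norm_num

lemma oD_zero (M : 𝔸) : oD M 0 = 0 := by
  simp [oD]

lemma oS_zero (M : 𝔸) : oS M 0 = 0 := by
  simp [oS]

lemma commC (M : 𝔸) (s : ℝ) : Commute (oC M s) (M * M) := by
  have c1 : Commute (exp (s • M)) M := ((Commute.refl M).smul_left s).exp_left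
  have c2 : Commute (exp (s • (-M))) M :=
    (((Commute.refl M).neg_left).smul_left s).exp_left
  exact ((c1.mul_right c1).add_left (c2.mul_right c2)).smul_left _

lemma key1 (M : 𝔸) (t : ℝ) : M * oD M t = oS M t * (M * M) := by
  have hdiff : ∀ r : ℝ, HasDerivAt (fun r => M * oD M r - oS M r * (M * M)) 0 r := by
    intro r
    have h1 := (hD' M r).const_mul M
    have h2 := (hS' M r).mul_const (M * M)
    have h := h1.sub h2
    have hcomm := commC M r
    have hz : M * (M * oC M r) - oC M r * (M * M) = 0 := by
      rw [← mul_assoc, ← hcomm.eq]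
      exact sub_self _
    rwa [hz] at h
  have hconst := is_const_of_deriv_eq_zero
    (fun r => (hdiff r).differentiableAt) (fun r => (hdiff r).deriv) t 0
  have h0 : M * oD M 0 - oS M 0 * (M * M) = 0 := by
    simp [oD_zero, oS_zero]
  exact sub_eq_zero.mp (hconst.trans h0)

lemma cos_sub_eq (M N : 𝔸) (s : ℝ) :
    oC M s - oC N s = ∫ r in (0:ℝ)..s, oS N (s - r) * ((M * M - N * N) * oC M r) := by
  set g : ℝ → 𝔸 := fun r => oS N (s - r) * (M * oD M r) + oC N (s - r) * oC M r with hg_def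
  have hg : ∀ r : ℝ, HasDerivAt g (oS N (s - r) * ((M * M - N * N) * oC M r)) r := by
    intro r
    have hsub : HasDerivAt (fun r : ℝ => s - r) (-1) r := by
      simpa using (hasDerivAt_id r).const_sub s
    have hA1 : HasDerivAt (fun r : ℝ => oS N (s - r)) (-oC N (s - r)) r := by
      have h := (hS' N (s - r)).scomp r hsub
      simpa [Function.comp_def] using h
    have hA2 : HasDerivAt (fun r : ℝ => oC N (s - r)) (-(N * oD N (s - r))) r := by
      have h := (hC' N (s - r)).scomp r hsub
      simpa [Function.comp_def] using h
    have hB1 : HasDerivAt (fun r => M * oD M r) (M * (M * oC M r)) r := (hD' M r).const_mul M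
    have hB2 := hC' M r
    have h := (hA1.mul hB1).add (hA2.mul hB2)
    convert h using 1
    case e'_4 => rfl
    case e'_8 => rfl
    rw [key1 N (s - r)]
    noncomm_ring
  have hcont : Continuous fun r => oS N (s - r) * ((M * M - N * N) * oC M r) :=
    ((contS N).comp (continuous_const.sub continuous_id)).mul (continuous_const.mul (contC M))
  have hFTC := intervalIntegral.integral_eq_sub_of_hasDerivAt
    (fun r _ => hg r) (hcont.intervalIntegrable 0 s)
  rw [hFTC]
  simp [hg_def, oS_zero, oC_zero, oD_zero]

lemma normC_le (M : 𝔸) (hM : ∀ t : ℝ, ‖exp (t • M)‖ ≤ 1) (s : ℝ) : ‖oC M s‖ ≤ 1 := by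
  have h1 := hM s
  have h2 : ‖exp (s • (-M))‖ ≤ 1 := by
    rw [smul_neg, ← neg_smul]
    exact hM (-s)
  have h3 := norm_add_le (exp (s • M)) (exp (s • (-M)))
  rw [oC, norm_smul]
  have h4 : ‖(2:ℝ)⁻¹‖ = 2⁻¹ := by
    rw [Real.norm_eq_abs, abs_of_pos]; norm_num
  rw [h4]
  nlinarith [norm_nonneg (exp (s • M) + exp (s • (-M)))]

lemma normS_le (M : 𝔸) (hM : ∀ t : ℝ, ‖exp (t • M)‖ ≤ 1) (t : ℝ) : ‖oS M t‖ ≤ |t| := by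
  have h := intervalIntegral.norm_integral_le_of_norm_le_const
    (C := 1) (f := oC M) (a := 0) (b := t) (fun x _ => normC_le M hM x)
  simpa [oS] using h

lemma cos_diff_norm_nonneg (M N : 𝔸) (hM : ∀ t : ℝ, ‖exp (t • M)‖ ≤ 1)
    (hN : ∀ t : ℝ, ‖exp (t • N)‖ ≤ 1) {s : ℝ} (hs : 0 ≤ s) :
    ‖oC M s - oC N s‖ ≤ s ^ 2 / 2 * ‖M * M - N * N‖ := by
  rw [cos_sub_eq M N s]
  have hbound : ∀ r ∈ Set.uIoc (0:ℝ) s,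
      ‖oS N (s - r) * ((M * M - N * N) * oC M r)‖ ≤ (s - r) * ‖M * M - N * N‖ := by
    intro r hr
    rw [Set.uIoc_of_le hs] at hr
    have hr1 : 0 < r := hr.1
    have hr2 : r ≤ s := hr.2
    calc ‖oS N (s - r) * ((M * M - N * N) * oC M r)‖
        ≤ ‖oS N (s - r)‖ * (‖M * M - N * N‖ * ‖oC M r‖) :=
          (norm_mul_le _ _).trans (by gcongr; exact norm_mul_le _ _)
      _ ≤ |s - r| * (‖M * M - N * N‖ * 1) := by
          gcongr
          · exact normS_le N hN _
          · exact normC_le M hM r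
      _ = (s - r) * ‖M * M - N * N‖ := by
          rw [abs_of_nonneg (by linarith)]; ring
  have hint : IntervalIntegrable (fun r => (s - r) * ‖M * M - N * N‖) volume 0 s :=
    (Continuous.mul (continuous_const.sub continuous_id) continuous_const).intervalIntegrable _ _
  have h := intervalIntegral.norm_integral_le_abs_of_norm_le
    (μ := volume) ((ae_restrict_iff' measurableSet_uIoc).mpr (ae_of_all _ hbound)) hint
  refine h.trans ?_
  have hval : (∫ r in (0:ℝ)..s, (s - r) * ‖M * M - N * N‖)
      = s ^ 2 / 2 * ‖M * M - N * N‖ := by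
    rw [intervalIntegral.integral_mul_const]
    have hid : (∫ x in (0:ℝ)..s, (s - x)) = ∫ x in (0:ℝ)..s, x := by
      have h := intervalIntegral.integral_comp_sub_left (a := (0:ℝ)) (b := s)
        (fun x : ℝ => x) s
      simpa using h
    rw [hid, integral_id]
    ring
  rw [hval]
  rw [abs_of_nonneg (by positivity)]

lemma oC_neg (M : 𝔸) (s : ℝ) : oC M (-s) = oC M s := by
  simp only [oC, neg_smul, smul_neg, neg_neg]
  rw [add_comm]

lemma cos_diff_norm (M N : 𝔸) (hM : ∀ t : ℝ, ‖exp (t • M)‖ ≤ 1)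
    (hN : ∀ t : ℝ, ‖exp (t • N)‖ ≤ 1) (s : ℝ) :
    ‖oC M s - oC N s‖ ≤ s ^ 2 / 2 * ‖M * M - N * N‖ := by
  rcases le_total 0 s with hs | hs
  · exact cos_diff_norm_nonneg M N hM hN hs
  · have h := cos_diff_norm_nonneg M N hM hN (neg_nonneg.mpr hs)
    rwa [oC_neg, oC_neg, neg_pow, neg_one_sq, one_mul] at h

end Stmt9Aux

section Concrete

variable {H : Type*} [NormedAddCommGroup H] [InnerProductSpace ℂ H] [CompleteSpace H]

noncomputable instance : NormedAlgebra ℚ (H →L[ℂ] H) := NormedAlgebra.restrictScalars ℚ ℂ _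

lemma smul_I_eq (A : H →L[ℂ] H) (s : ℝ) : ((s : ℂ) * Complex.I) • A = s • (Complex.I • A) := by
  rw [← Complex.coe_smul, smul_smul]

lemma exp_unit (A : H →L[ℂ] H) (hA : IsSelfAdjoint A) (t : ℝ) :
    ‖NormedSpace.exp (t • (Complex.I • A))‖ ≤ 1 := by
  have hskew : t • (Complex.I • A) ∈ skewAdjoint (H →L[ℂ] H) := by
    rw [skewAdjoint.mem_iff, ← smul_I_eq]
    rw [star_smul, hA.star_eq]
    rw [← neg_smul]
    congr 1
    simp [Complex.ext_iff]
  have hu := NormedSpace.exp_mem_unitary_of_mem_skewAdjoint hskew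
  set u := NormedSpace.exp (t • (Complex.I • A)) with hu_def
  have h1 : star u * u = 1 := (Unitary.mem_iff.mp hu).1
  have h2 : ‖u‖ * ‖u‖ = ‖(1 : H →L[ℂ] H)‖ := by
    rw [← CStarRing.norm_star_mul_self, h1]
  have h3 : ‖(1 : H →L[ℂ] H)‖ ≤ 1 := by
    rw [ContinuousLinearMap.one_def]
    exact ContinuousLinearMap.norm_id_le
  nlinarith [norm_nonneg u]

lemma opCos_eq_oC (A : H →L[ℂ] H) (s : ℝ) : opCos A s = Stmt9Aux.oC (Complex.I • A) s := by
  rw [opCos, Stmt9Aux.oC]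
  have h1 : ((s : ℂ) * Complex.I) • A = s • (Complex.I • A) := smul_I_eq A s
  have h2 : (-(s : ℂ) * Complex.I) • A = s • (-(Complex.I • A)) := by
    rw [neg_mul, neg_smul, smul_I_eq, ← smul_neg]
  rw [h1, h2, show ((2:ℂ)⁻¹) = (((2:ℝ)⁻¹ : ℝ) : ℂ) by norm_num, Complex.coe_smul]

lemma opCos_norm_le (A : H →L[ℂ] H) (hA : IsSelfAdjoint A) (s : ℝ) : ‖opCos A s‖ ≤ 1 := by
  rw [opCos_eq_oC]
  exact Stmt9Aux.normC_le _ (exp_unit A hA) s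

lemma opCos_diff_norm (A B : H →L[ℂ] H) (hA : IsSelfAdjoint A) (hB : IsSelfAdjoint B) (s : ℝ) :
    ‖opCos A s - opCos B s‖ ≤ s ^ 2 / 2 * ‖A ^ 2 - B ^ 2‖ := by
  rw [opCos_eq_oC, opCos_eq_oC]
  have h := Stmt9Aux.cos_diff_norm (Complex.I • A) (Complex.I • B)
    (exp_unit A hA) (exp_unit B hB) s
  have hMM : (Complex.I • A) * (Complex.I • A) = -(A ^ 2) := by
    rw [smul_mul_smul_comm, Complex.I_mul_I, neg_one_smul, sq]
  have hNN : (Complex.I • B) * (Complex.I • B) = -(B ^ 2) := by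
    rw [smul_mul_smul_comm, Complex.I_mul_I, neg_one_smul, sq]
  rw [hMM, hNN] at h
  have : -(A ^ 2) - -(B ^ 2) = -(A ^ 2 - B ^ 2) := by abel
  rwa [this, norm_neg] at h

lemma opCos_continuous (A : H →L[ℂ] H) : Continuous (opCos A) := by
  have : Continuous fun s : ℝ => Stmt9Aux.oC (Complex.I • A) s := Stmt9Aux.contC _
  simpa [funext fun s => opCos_eq_oC A s] using this

end Concrete

/-- With `T_ε^A`, `T_ε^B` built from the cosine families of bounded self-adjoint
operators `A`, `B`, a Schwartz profile `ψ` and a bounded continuous cutoff `φ` supported in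
`[-2c, 2c]`, one has
`‖T_ε^A - T_ε^B‖ ≤ (1/2) ‖A² - B²‖ (sup |φ|) (∫ σ² |ψ(σ)| dσ) ε²` for `ε ∈ (0,1]`. -/
theorem stmt9 {H : Type*} [NormedAddCommGroup H] [InnerProductSpace ℂ H] [CompleteSpace H]
    (A B : H →L[ℂ] H) (hA : IsSelfAdjoint A) (hB : IsSelfAdjoint B)
    (ψ : SchwartzMap ℝ ℂ) (c : ℝ) (hc : 0 < c) (φ : ℝ → ℂ)
    (hφcont : Continuous φ) (hφbdd : BddAbove (Set.range fun s : ℝ => ‖φ s‖))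
    (hφsupp : Function.support φ ⊆ Set.Icc (-(2 * c)) (2 * c)) :
    ∀ ε ∈ Set.Ioc (0 : ℝ) 1,
      ‖regOp A φ (⇑ψ) ε - regOp B φ (⇑ψ) ε‖ ≤
        (1 / 2) * ‖A ^ 2 - B ^ 2‖ * (⨆ s : ℝ, ‖φ s‖) *
          (∫ σ : ℝ, σ ^ 2 * ‖ψ σ‖) * ε ^ 2 := by
  intro ε hε
  obtain ⟨hε0, hε1⟩ := hε
  have hεne : ε ≠ 0 := hε0.ne'
  have hK0 : (0:ℝ) ≤ ‖A ^ 2 - B ^ 2‖ := norm_nonneg _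
  set K := ‖A ^ 2 - B ^ 2‖ with hK
  set Cφ := ⨆ s : ℝ, ‖φ s‖ with hCφ
  have hCφ_le : ∀ s : ℝ, ‖φ s‖ ≤ Cφ := fun s => le_ciSup hφbdd s
  have hCφ0 : 0 ≤ Cφ := (norm_nonneg _).trans (hCφ_le 0)
  set coef : ℝ → ℂ := fun s => φ s * (ε : ℂ)⁻¹ * ψ (s / ε) with hcoef
  have hcoef_cont : Continuous coef :=
    (hφcont.mul continuous_const).mul (ψ.continuous.comp (continuous_id.div_const ε))
  have hcoef_norm : ∀ s, ‖coef s‖ = ‖φ s‖ * ε⁻¹ * ‖ψ (s / ε)‖ := by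
    intro s
    rw [hcoef]
    simp [norm_mul, abs_of_pos hε0]
  -- dominating integrable function for the integrands
  have hdom : Integrable (fun s : ℝ => Cφ * (ε⁻¹ * ‖ψ (s / ε)‖)) volume := by
    have h1 : Integrable (fun σ : ℝ => ‖ψ σ‖) volume := (ψ.integrable).norm
    have h2 : Integrable (fun s : ℝ => ‖ψ (s / ε)‖) volume := h1.comp_div hε0.ne'
    exact (h2.const_mul _).const_mul _
  have hIntegrand : ∀ (C : H →L[ℂ] H) (hC : IsSelfAdjoint C),
      Integrable (fun s : ℝ => coef s • opCos C s) volume := by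
    intro C hC
    haveI : SecondCountableTopologyEither ℝ (H →L[ℂ] H) :=
      ⟨Or.inl inferInstance⟩
    apply Integrable.mono' hdom
    · exact (hcoef_cont.smul (opCos_continuous C)).aestronglyMeasurable
    · refine ae_of_all _ fun s => ?_
      rw [norm_smul, hcoef_norm]
      calc ‖φ s‖ * ε⁻¹ * ‖ψ (s / ε)‖ * ‖opCos C s‖
          ≤ ‖φ s‖ * ε⁻¹ * ‖ψ (s / ε)‖ * 1 :=
            mul_le_mul_of_nonneg_left (opCos_norm_le C hC s) (by positivity)
        _ ≤ Cφ * (ε⁻¹ * ‖ψ (s / ε)‖) := by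
            rw [mul_one]
            have := hCφ_le s
            have h1 : (0:ℝ) ≤ ε⁻¹ * ‖ψ (s / ε)‖ := by positivity
            calc ‖φ s‖ * ε⁻¹ * ‖ψ (s / ε)‖ = ‖φ s‖ * (ε⁻¹ * ‖ψ (s / ε)‖) := by ring
              _ ≤ Cφ * (ε⁻¹ * ‖ψ (s / ε)‖) := by gcongr
  have hIA := hIntegrand A hA
  have hIB := hIntegrand B hB
  have hdiff : regOp A φ (⇑ψ) ε - regOp B φ (⇑ψ) ε
      = ∫ s : ℝ, coef s • (opCos A s - opCos B s) := by
    rw [regOp, regOp, ← integral_sub hIA hIB]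
    congr 1
    ext s
    rw [smul_sub]
  -- integrable bound function
  set bnd : ℝ → ℝ := fun s => Cφ * (K / 2) * (s ^ 2 * (ε⁻¹ * ‖ψ (s / ε)‖)) with hbnd
  have hg_int : Integrable (fun σ : ℝ => σ ^ 2 * ‖ψ σ‖) volume := by
    have := ψ.integrable_pow_mul (μ := volume) 2
    apply this.congr
    refine ae_of_all _ fun σ => ?_
    simp [Real.norm_eq_abs, sq_abs]
  have hbnd_int : Integrable bnd volume := by
    have h1 : Integrable (fun s : ℝ => (s / ε) ^ 2 * ‖ψ (s / ε)‖) volume :=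
      hg_int.comp_div hε0.ne'
    have h2 : Integrable (fun s : ℝ => Cφ * (K / 2) *
        (ε ^ 2 * (ε⁻¹ * ((s / ε) ^ 2 * ‖ψ (s / ε)‖)))) volume := by
      exact ((h1.const_mul _).const_mul _).const_mul _
    apply h2.congr
    refine ae_of_all _ fun s => ?_
    simp only [hbnd]
    field_simp
  have hnorm_le : ‖regOp A φ (⇑ψ) ε - regOp B φ (⇑ψ) ε‖ ≤ ∫ s : ℝ, bnd s := by
    rw [hdiff]
    apply norm_integral_le_of_norm_le hbnd_int
    refine ae_of_all _ fun s => ?_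
    rw [norm_smul, hcoef_norm]
    calc ‖φ s‖ * ε⁻¹ * ‖ψ (s / ε)‖ * ‖opCos A s - opCos B s‖
        ≤ Cφ * ε⁻¹ * ‖ψ (s / ε)‖ * (s ^ 2 / 2 * K) := by
          gcongr <;>
            first
              | exact hCφ_le s
              | exact opCos_diff_norm A B hA hB s
              | positivity
              | exact mul_nonneg (by positivity) hK0
      _ = bnd s := by rw [hbnd]; ring
  refine hnorm_le.trans (le_of_eq ?_)
  -- compute the integral of the bound
  have hchange : (∫ s : ℝ, s ^ 2 * (ε⁻¹ * ‖ψ (s / ε)‖))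
      = ε ^ 2 * ∫ σ : ℝ, σ ^ 2 * ‖ψ σ‖ := by
    have h := MeasureTheory.Measure.integral_comp_div (fun σ : ℝ => ε * (σ ^ 2 * ‖ψ σ‖)) ε
    have heq : ∀ s : ℝ, ε * ((s / ε) ^ 2 * ‖ψ (s / ε)‖) = s ^ 2 * (ε⁻¹ * ‖ψ (s / ε)‖) := by
      intro s
      field_simp
    rw [show (fun x : ℝ => ε * ((x / ε) ^ 2 * ‖ψ (x / ε)‖)) = fun x : ℝ =>
      x ^ 2 * (ε⁻¹ * ‖ψ (x / ε)‖) from funext heq] at h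
    rw [h, integral_const_mul, abs_of_pos hε0, smul_eq_mul]
    ring
  rw [hbnd]
  rw [integral_const_mul]
  rw [hchange]
  ring
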